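/- There exists a constant C' > 0 such that for all t > 0, ∫_{ℚ_p^n∖ℤ_p^n} e^{−t A(ξ)} dⁿξ ≤ C' t^{−n/β}; and there exists a constant C > 0 such that for all 0 < t ≤ 1, ∫_{ℚ_p^n∖ℤ_p^n} e^{−t A(ξ)} dⁿξ ≥ C t^{−n/β}. -/

import Mathlib

set_option maxHeartbeats 1000000


open MeasureTheory Filter Topology Metric Pointwise Real

noncomputable instance qpnMeasurableSpace {p : ℕ} [Fact p.Prime] {n : ℕ} :
    MeasurableSpace (Fin n → ℚ_[p]) := borel _

instance qpnBorelSpace {p : ℕ} [Fact p.Prime] {n : ℕ} :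
    BorelSpace (Fin n → ℚ_[p]) := ⟨rfl⟩


/-- exp decay beats any power. -/
lemma exp_decay_bound (γ' : ℝ) (hγ' : 0 < γ') :
    ∃ K : ℝ, 1 ≤ K ∧ ∀ x : ℝ, 0 < x → Real.exp (-x) ≤ K * x ^ (-γ') := by
  set k : ℕ := ⌈γ'⌉₊ with hk
  refine ⟨(k : ℕ).factorial, by exact_mod_cast Nat.one_le_iff_ne_zero.2 (Nat.factorial_ne_zero k), ?_⟩
  intro x hx
  have hK1 : (1:ℝ) ≤ (k.factorial : ℝ) := by exact_mod_cast Nat.one_le_iff_ne_zero.2 (Nat.factorial_ne_zero k)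
  have key : x ^ γ' ≤ (k.factorial : ℝ) * Real.exp x := by
    rcases le_total x 1 with h | h
    · have h1 : x ^ γ' ≤ 1 := Real.rpow_le_one hx.le h hγ'.le
      have h2 : (1:ℝ) ≤ Real.exp x := by
        have := Real.add_one_le_exp x; linarith
      nlinarith
    · have h1 : x ^ γ' ≤ x ^ (k:ℝ) := by
        apply Real.rpow_le_rpow_of_exponent_le h
        exact_mod_cast Nat.le_ceil γ'
      have h2 : x ^ (k:ℝ) = x ^ k := Real.rpow_natCast x k
      have h3 : x ^ k / (k.factorial : ℝ) ≤ Real.exp x := by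
        have := Real.sum_le_exp_of_nonneg hx.le (k+1)
        refine le_trans ?_ this
        apply Finset.single_le_sum (f := fun i => x ^ i / (i.factorial : ℝ))
          (fun i _ => by positivity) (Finset.self_mem_range_succ k)
      have hf : (0:ℝ) < (k.factorial : ℝ) := by positivity
      rw [div_le_iff₀ hf] at h3
      calc x ^ γ' ≤ x ^ k := by rw [← h2]; exact h1
        _ ≤ Real.exp x * (k.factorial:ℝ) := h3
        _ = (k.factorial:ℝ) * Real.exp x := by ring
  have hb : (0:ℝ) < x ^ γ' := Real.rpow_pos_of_pos hx _
  have ha : (0:ℝ) < Real.exp x := Real.exp_pos x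
  rw [Real.exp_neg, Real.rpow_neg hx.le]
  rw [inv_le_iff_one_le_mul₀ ha]
  have := mul_le_mul_of_nonneg_left key (le_of_lt (inv_pos.2 hb))
  calc (1:ℝ) = (x ^ γ')⁻¹ * x ^ γ' := (inv_mul_cancel₀ hb.ne').symm
    _ ≤ (x ^ γ')⁻¹ * ((k.factorial:ℝ) * Real.exp x) := this
    _ = (k.factorial:ℝ) * (x ^ γ')⁻¹ * Real.exp x := by ring

/-- Key summation bound: `∑_{m≥0} (P^γ)^m e^{-c P^m} ≤ K c^{-γ}`. -/
lemma padic_sum_bound (P γ : ℝ) (hP : 1 < P) (hγ : 0 < γ) :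
    ∃ K : ℝ, 0 < K ∧ ∀ c : ℝ, 0 < c →
      Summable (fun m : ℕ => (P ^ γ) ^ m * Real.exp (-(c * P ^ m))) ∧
      ∑' m : ℕ, (P ^ γ) ^ m * Real.exp (-(c * P ^ m)) ≤ K * c ^ (-γ) := by
  have hP0 : (0:ℝ) < P := lt_trans one_pos hP
  set Q : ℝ := P ^ γ with hQdef
  have hQ : 1 < Q := Real.one_lt_rpow_iff_of_pos hP0 |>.2 (Or.inl ⟨hP, hγ⟩)
  have hQ0 : (0:ℝ) < Q := lt_trans one_pos hQ
  -- Q^m = (P^m)^γ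
  have hQm : ∀ m : ℕ, Q ^ m = (P ^ m) ^ γ := by
    intro m
    rw [← Real.rpow_natCast Q m, ← Real.rpow_natCast P m, hQdef,
      ← Real.rpow_mul hP0.le, ← Real.rpow_mul hP0.le, mul_comm]
  obtain ⟨K₁, hK₁1, hK₁⟩ := exp_decay_bound (γ + 1) (by linarith)
  have hK₁0 : (0:ℝ) < K₁ := lt_of_lt_of_le one_pos hK₁1
  have hPinv : (0:ℝ) < P⁻¹ := inv_pos.2 hP0
  have hPinv1 : P⁻¹ < 1 := inv_lt_one_of_one_lt₀ hP
  -- main pointwise estimate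
  have H : ∀ c : ℝ, 0 < c → ∀ m : ℕ,
      Q ^ m * Real.exp (-(c * P ^ m)) ≤ K₁ * c ^ (-γ) * (c⁻¹ * (P⁻¹) ^ m) := by
    intro c hc m
    have hPm : (0:ℝ) < P ^ m := pow_pos hP0 m
    have hx : (0:ℝ) < c * P ^ m := mul_pos hc hPm
    have he : Real.exp (-(c * P ^ m)) ≤ K₁ * (c * P ^ m) ^ (-(γ + 1)) := hK₁ _ hx
    have hexpand : (c * P ^ m) ^ (-(γ + 1))
        = c ^ (-γ) * (P ^ m) ^ (-γ) * (c⁻¹ * (P ^ m)⁻¹) := by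
      rw [show -(γ + 1) = -γ + (-1) by ring, Real.rpow_add hx,
        Real.mul_rpow hc.le hPm.le, Real.rpow_neg_one, mul_inv]
    have hcancel : Q ^ m * (P ^ m) ^ (-γ) = 1 := by
      rw [hQm m, ← Real.rpow_add hPm, add_neg_cancel, Real.rpow_zero]
    calc Q ^ m * Real.exp (-(c * P ^ m))
        ≤ Q ^ m * (K₁ * (c * P ^ m) ^ (-(γ + 1))) := by
          apply mul_le_mul_of_nonneg_left he (by positivity)
      _ = (Q ^ m * (P ^ m) ^ (-γ)) * (K₁ * c ^ (-γ) * (c⁻¹ * (P ^ m)⁻¹)) := by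
          rw [hexpand]; ring
      _ = K₁ * c ^ (-γ) * (c⁻¹ * (P⁻¹) ^ m) := by
          rw [hcancel, one_mul, inv_pow]
  have hQ1 : (0:ℝ) < Q - 1 := by linarith
  have hP1 : (0:ℝ) < 1 - P⁻¹ := by linarith
  refine ⟨P ^ γ * (Q - 1)⁻¹ + K₁ * (1 - P⁻¹)⁻¹, by positivity, ?_⟩
  intro c hc
  have hcγ : (0:ℝ) < c ^ (-γ) := Real.rpow_pos_of_pos hc _
  -- summability
  have hsumgeo : Summable (fun m : ℕ => (K₁ * c ^ (-γ) * c⁻¹) * (P⁻¹) ^ m) :=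
    (summable_geometric_of_lt_one hPinv.le hPinv1).mul_left _
  have hsum : Summable (fun m : ℕ => Q ^ m * Real.exp (-(c * P ^ m))) := by
    apply Summable.of_nonneg_of_le (fun m => by positivity) (fun m => ?_) hsumgeo
    calc Q ^ m * Real.exp (-(c * P ^ m)) ≤ K₁ * c ^ (-γ) * (c⁻¹ * (P⁻¹) ^ m) := H c hc m
      _ = K₁ * c ^ (-γ) * c⁻¹ * (P⁻¹) ^ m := by ring
  refine ⟨hsum, ?_⟩
  -- choose threshold M
  set M : ℕ := ⌈Real.logb P c⁻¹⌉₊ with hM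
  have h1 : 1 ≤ c * P ^ M := by
    have h2 : Real.logb P c⁻¹ ≤ (M : ℝ) := Nat.le_ceil _
    have h3 : c⁻¹ ≤ P ^ (M : ℝ) := by
      calc c⁻¹ = P ^ Real.logb P c⁻¹ := (Real.rpow_logb hP0 hP.ne' (inv_pos.2 hc)).symm
        _ ≤ P ^ (M:ℝ) := Real.rpow_le_rpow_of_exponent_le hP.le h2
    rw [Real.rpow_natCast] at h3
    calc (1:ℝ) = c * c⁻¹ := (mul_inv_cancel₀ hc.ne').symm
      _ ≤ c * P ^ M := by exact mul_le_mul_of_nonneg_left h3 hc.le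
  -- head bound
  have hhead : ∑ m ∈ Finset.range M, Q ^ m * Real.exp (-(c * P ^ m))
      ≤ P ^ γ * (Q - 1)⁻¹ * c ^ (-γ) := by
    rcases Nat.eq_zero_or_pos M with h | hMpos
    · rw [h]; simp; positivity
    · have hQM : Q ^ M ≤ P ^ γ * c ^ (-γ) := by
        have hx0 : 0 < Real.logb P c⁻¹ := by
          by_contra hcon
          push_neg at hcon
          have : M = 0 := Nat.ceil_eq_zero.2 hcon
          omega
        have h2 : (M : ℝ) < Real.logb P c⁻¹ + 1 := Nat.ceil_lt_add_one hx0.le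
        have h3 : Q ^ M = P ^ (γ * (M:ℝ)) := by
          rw [← Real.rpow_natCast Q M, hQdef, ← Real.rpow_mul hP0.le]
        rw [h3]
        have h4 : P ^ (γ * (M:ℝ)) ≤ P ^ (γ * (Real.logb P c⁻¹ + 1)) := by
          apply Real.rpow_le_rpow_of_exponent_le hP.le
          nlinarith
        refine le_trans h4 (le_of_eq ?_)
        rw [mul_add, mul_one, Real.rpow_add hP0, mul_comm γ, Real.rpow_mul hP0.le,
          Real.rpow_logb hP0 hP.ne' (inv_pos.2 hc),
          Real.inv_rpow hc.le, ← Real.rpow_neg hc.le]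
        ring
      calc ∑ m ∈ Finset.range M, Q ^ m * Real.exp (-(c * P ^ m))
          ≤ ∑ m ∈ Finset.range M, Q ^ m := by
            apply Finset.sum_le_sum
            intro m _
            have he1 : Real.exp (-(c * P ^ m)) ≤ 1 :=
              Real.exp_le_one_iff.2 (neg_nonpos_of_nonneg (by positivity))
            nlinarith [pow_pos hQ0 m, pow_nonneg hQ0.le m]
        _ = (Q ^ M - 1) / (Q - 1) := geom_sum_eq hQ.ne' M
        _ ≤ Q ^ M / (Q - 1) := by gcongr; linarith
        _ ≤ P ^ γ * c ^ (-γ) / (Q - 1) := by gcongr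
        _ = P ^ γ * (Q - 1)⁻¹ * c ^ (-γ) := by ring
  have htail : ∑' j : ℕ, Q ^ (j + M) * Real.exp (-(c * P ^ (j + M)))
      ≤ K₁ * (1 - P⁻¹)⁻¹ * c ^ (-γ) := by
    have hterm : ∀ j : ℕ, Q ^ (j + M) * Real.exp (-(c * P ^ (j + M)))
        ≤ (K₁ * c ^ (-γ)) * (P⁻¹) ^ j := by
      intro j
      calc Q ^ (j + M) * Real.exp (-(c * P ^ (j + M)))
          ≤ K₁ * c ^ (-γ) * (c⁻¹ * (P⁻¹) ^ (j + M)) := H c hc (j + M)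
        _ = (K₁ * c ^ (-γ)) * ((P⁻¹) ^ j * (c * P ^ M)⁻¹) := by
            rw [pow_add, mul_inv, inv_pow]; ring
        _ ≤ (K₁ * c ^ (-γ)) * ((P⁻¹) ^ j * 1) := by
            have h5 : (c * P ^ M)⁻¹ ≤ 1 := inv_le_one_of_one_le₀ h1
            have h6 : (0:ℝ) ≤ (P⁻¹) ^ j := by positivity
            have h7 : (0:ℝ) ≤ K₁ * c ^ (-γ) := by positivity
            apply mul_le_mul_of_nonneg_left _ h7
            exact mul_le_mul_of_nonneg_left h5 h6
        _ = (K₁ * c ^ (-γ)) * (P⁻¹) ^ j := by ring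
    have hsumL : Summable fun j : ℕ => Q ^ (j + M) * Real.exp (-(c * P ^ (j + M))) :=
      (summable_nat_add_iff M).2 hsum
    have hsumR : Summable fun j : ℕ => (K₁ * c ^ (-γ)) * (P⁻¹) ^ j :=
      (summable_geometric_of_lt_one hPinv.le hPinv1).mul_left _
    calc ∑' j : ℕ, Q ^ (j + M) * Real.exp (-(c * P ^ (j + M)))
        ≤ ∑' j : ℕ, (K₁ * c ^ (-γ)) * (P⁻¹) ^ j := Summable.tsum_le_tsum hterm hsumL hsumR
      _ = (K₁ * c ^ (-γ)) * (1 - P⁻¹)⁻¹ := by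
          rw [tsum_mul_left, tsum_geometric_of_lt_one hPinv.le hPinv1]
      _ = K₁ * (1 - P⁻¹)⁻¹ * c ^ (-γ) := by ring
  calc ∑' m : ℕ, Q ^ m * Real.exp (-(c * P ^ m))
      = ∑ m ∈ Finset.range M, Q ^ m * Real.exp (-(c * P ^ m))
        + ∑' j : ℕ, Q ^ (j + M) * Real.exp (-(c * P ^ (j + M))) :=
        (Summable.sum_add_tsum_nat_add M hsum).symm
    _ ≤ P ^ γ * (Q - 1)⁻¹ * c ^ (-γ) + K₁ * (1 - P⁻¹)⁻¹ * c ^ (-γ) :=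
        add_le_add hhead htail
    _ = (P ^ γ * (Q - 1)⁻¹ + K₁ * (1 - P⁻¹)⁻¹) * c ^ (-γ) := by ring


section Ball
variable {p : ℕ} [Fact p.Prime] {n : ℕ}

lemma hp1 : (1:ℝ) < (p:ℝ) := by exact_mod_cast (Fact.out : p.Prime).one_lt

lemma cover_step (m : ℕ) :
    closedBall (0 : Fin n → ℚ_[p]) ((p:ℝ)^(m+1)) =
      ⋃ v : Fin n → Fin p,
        ((fun i => ((v i : ℕ) : ℚ_[p]) * ((p : ℚ_[p])^(m+1))⁻¹) +ᵥ
          closedBall (0 : Fin n → ℚ_[p]) ((p:ℝ)^m)) := by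
  have hp0 : (0:ℝ) < p := lt_trans one_pos hp1
  have hpQ : ((p:ℚ_[p])^(m+1)) ≠ 0 := by
    apply pow_ne_zero
    exact_mod_cast (Fact.out : p.Prime).ne_zero
  have hπ : ‖((p : ℚ_[p])^(m+1))⁻¹‖ = (p:ℝ)^(m+1) := by
    rw [norm_inv, Padic.norm_p_pow, ← Real.rpow_intCast, ← Real.rpow_natCast (p:ℝ) (m+1),
      ← Real.rpow_neg_one, ← Real.rpow_mul hp0.le]
    push_cast
    ring_nf
  ext ξ
  simp only [Set.mem_iUnion, Set.mem_vadd_set_iff_neg_vadd_mem, vadd_eq_add, mem_closedBall,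
    dist_zero_right]
  constructor
  · intro hξ
    -- construct digits
    have hcomp : ∀ i, ‖ξ i * (p:ℚ_[p])^(m+1)‖ ≤ 1 := by
      intro i
      rw [norm_mul, Padic.norm_p_pow]
      have h1 : ‖ξ i‖ ≤ (p:ℝ)^(m+1) := le_trans (norm_le_pi_norm ξ i) hξ
      have h2 : ((p:ℝ)^(m+1))⁻¹ = (p:ℝ)^(-((m:ℤ)+1)) := by
        rw [← zpow_natCast (p:ℝ) (m+1)]
        push_cast
        rw [← zpow_neg]
      calc ‖ξ i‖ * (p:ℝ)^(-((m+1:ℕ):ℤ)) ≤ (p:ℝ)^(m+1) * (p:ℝ)^(-((m:ℤ)+1)) := by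
            apply mul_le_mul_of_nonneg_right h1 (by positivity)
        _ = 1 := by
            rw [← h2, mul_inv_cancel₀ (by positivity)]
    set Pi0 : ℚ_[p] := ((p : ℚ_[p])^(m+1))⁻¹ with hπdef
    set z : Fin n → ℤ_[p] := fun i => ⟨ξ i * (p:ℚ_[p])^(m+1), hcomp i⟩ with hz
    refine ⟨fun i => (⟨(z i).appr 1, by simpa using (z i).appr_lt 1⟩ : Fin p), ?_⟩
    rw [pi_norm_le_iff_of_nonneg (by positivity)]
    intro i
    have hdvd : ((p:ℤ_[p])^1) ∣ (z i - ((z i).appr 1 : ℤ_[p])) :=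
      Ideal.mem_span_singleton.1 (PadicInt.appr_spec 1 (z i))
    obtain ⟨w, hw⟩ := hdvd
    have hnorm1 : ‖((z i : ℚ_[p]) - ((z i).appr 1 : ℚ_[p]))‖ ≤ (p:ℝ)⁻¹ := by
      have h1 : ((z i : ℚ_[p]) - ((z i).appr 1 : ℚ_[p])) = ((z i - ((z i).appr 1 : ℤ_[p]) : ℤ_[p]) : ℚ_[p]) := by
        push_cast
        ring
      rw [h1, PadicInt.padic_norm_e_of_padicInt, hw, pow_one, norm_mul, PadicInt.norm_p]
      calc (p:ℝ)⁻¹ * ‖w‖ ≤ (p:ℝ)⁻¹ * 1 := by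
            apply mul_le_mul_of_nonneg_left w.norm_le_one (by positivity)
        _ = (p:ℝ)⁻¹ := mul_one _
    have hcompi : (-(fun i => (((z i).appr 1 : ℕ) : ℚ_[p]) * Pi0) + ξ) i
        = ((z i : ℚ_[p]) - ((z i).appr 1 : ℚ_[p])) * Pi0 := by
      simp only [Pi.add_apply, Pi.neg_apply]
      have hz2 : (z i : ℚ_[p]) = ξ i * (p:ℚ_[p])^(m+1) := rfl
      rw [show ((z i : ℚ_[p]) - ((z i).appr 1 : ℚ_[p])) * Pi0
          = (ξ i * (p:ℚ_[p])^(m+1) - ((z i).appr 1 : ℚ_[p])) * Pi0 by rw [hz2], hπdef]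
      field_simp
      ring
    calc ‖(-(fun i => (((z i).appr 1 : ℕ) : ℚ_[p]) * Pi0) + ξ) i‖
        = ‖(z i : ℚ_[p]) - ((z i).appr 1 : ℚ_[p])‖ * (p:ℝ)^(m+1) := by
          rw [hcompi, norm_mul, hπ]
      _ ≤ (p:ℝ)⁻¹ * (p:ℝ)^(m+1) := mul_le_mul_of_nonneg_right hnorm1 (by positivity)
      _ = (p:ℝ)^m := by
          rw [pow_succ]
          field_simp
  · rintro ⟨v, hv⟩
    rw [pi_norm_le_iff_of_nonneg (by positivity)]
    intro i
    set c : Fin n → ℚ_[p] := fun i => ((v i : ℕ) : ℚ_[p]) * ((p : ℚ_[p])^(m+1))⁻¹ with hc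
    have h1 : ξ i = c i + (-c + ξ) i := by simp
    have h2 : ‖c i‖ ≤ (p:ℝ)^(m+1) := by
      rw [hc]
      simp only []
      rw [norm_mul, hπ]
      have h3 : ‖((v i : ℕ) : ℚ_[p])‖ ≤ 1 := by
        have := Padic.norm_int_le_one (p := p) ((v i : ℕ) : ℤ)
        push_cast at this
        exact this
      nlinarith [pow_pos hp0 (m+1)]
    have h4 : ‖(-c + ξ) i‖ ≤ (p:ℝ)^m := le_trans (norm_le_pi_norm _ i) hv
    have h5 : (p:ℝ)^m ≤ (p:ℝ)^(m+1) := by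
      apply pow_le_pow_right₀ (le_of_lt hp1)
      omega
    calc ‖ξ i‖ = ‖c i + (-c + ξ) i‖ := by rw [← h1]
      _ ≤ max ‖c i‖ ‖(-c + ξ) i‖ := Padic.nonarchimedean _ _
      _ ≤ (p:ℝ)^(m+1) := max_le h2 (le_trans h4 h5)


lemma disj_step (m : ℕ) :
    Pairwise (Function.onFun Disjoint (fun v : Fin n → Fin p =>
      ((fun i => ((v i : ℕ) : ℚ_[p]) * ((p : ℚ_[p])^(m+1))⁻¹) +ᵥ
        closedBall (0 : Fin n → ℚ_[p]) ((p:ℝ)^m)))) := by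
  have hp0 : (0:ℝ) < p := lt_trans one_pos hp1
  have hπ : ‖((p : ℚ_[p])^(m+1))⁻¹‖ = (p:ℝ)^(m+1) := by
    rw [norm_inv, Padic.norm_p_pow, ← Real.rpow_intCast, ← Real.rpow_natCast (p:ℝ) (m+1),
      ← Real.rpow_neg_one, ← Real.rpow_mul hp0.le]
    push_cast
    ring_nf
  intro v w hvw
  rw [Function.onFun, Set.disjoint_left]
  intro η h1 h2
  set cv : Fin n → ℚ_[p] := fun i => ((v i : ℕ) : ℚ_[p]) * ((p : ℚ_[p])^(m+1))⁻¹ with hcv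
  set cw : Fin n → ℚ_[p] := fun i => ((w i : ℕ) : ℚ_[p]) * ((p : ℚ_[p])^(m+1))⁻¹ with hcw
  rw [Set.mem_vadd_set_iff_neg_vadd_mem, vadd_eq_add, mem_closedBall, dist_zero_right] at h1 h2
  obtain ⟨i, hi⟩ := Function.ne_iff.1 hvw
  have hnorm : ‖cv i - cw i‖ = (p:ℝ)^(m+1) := by
    have hint : ((v i : ℕ) : ℚ_[p]) - ((w i : ℕ) : ℚ_[p])
        = (((v i : ℕ) - (w i : ℕ) : ℤ) : ℚ_[p]) := by push_cast; ring
    have hone : ‖(((v i : ℕ) - (w i : ℕ) : ℤ) : ℚ_[p])‖ = 1 := by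
      apply le_antisymm (Padic.norm_int_le_one _)
      by_contra hlt
      push_neg at hlt
      have hdvd : (p:ℤ) ∣ ((v i : ℕ) - (w i : ℕ) : ℤ) :=
        Padic.norm_intCast_lt_one_iff.1 hlt
      have habs : |((v i : ℕ) - (w i : ℕ) : ℤ)| < (p:ℤ) := by
        have := (v i).isLt
        have := (w i).isLt
        rw [abs_lt]
        omega
      have := Int.eq_zero_of_abs_lt_dvd hdvd habs
      have hne : ((v i : ℕ) : ℤ) ≠ ((w i : ℕ) : ℤ) := by
        simpa [Fin.val_injective.ne_iff] using (Fin.val_ne_of_ne hi)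
      omega
    have : cv i - cw i = (((v i : ℕ) - (w i : ℕ) : ℤ) : ℚ_[p]) * ((p : ℚ_[p])^(m+1))⁻¹ := by
      rw [hcv, hcw]
      push_cast
      ring
    rw [this, norm_mul, hone, hπ, one_mul]
  have hle : ‖cv i - cw i‖ ≤ (p:ℝ)^m := by
    have e1 : cv i - cw i = (-cw + η) i - ((-cv + η)) i := by
      simp only [Pi.add_apply, Pi.neg_apply]
      ring
    rw [e1, sub_eq_add_neg]
    calc ‖(-cw + η) i + -((-cv + η) i)‖ ≤ max ‖(-cw + η) i‖ ‖-((-cv + η) i)‖ :=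
          Padic.nonarchimedean _ _
      _ ≤ (p:ℝ)^m := by
          rw [norm_neg]
          exact max_le (le_trans (norm_le_pi_norm _ i) h2) (le_trans (norm_le_pi_norm _ i) h1)
  have : (p:ℝ)^m < (p:ℝ)^(m+1) := pow_lt_pow_right₀ hp1 (by omega)
  rw [hnorm] at hle
  linarith

lemma ball_meas (μ : Measure (Fin n → ℚ_[p])) [μ.IsAddHaarMeasure]
    (hμ : μ (closedBall (0 : Fin n → ℚ_[p]) 1) = 1) (m : ℕ) :
    μ (closedBall (0 : Fin n → ℚ_[p]) ((p:ℝ)^m)) = ((p^n : ℕ) : ENNReal)^m := by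
  induction m with
  | zero => simpa using hμ
  | succ m ih =>
    rw [cover_step m, measure_iUnion (disj_step m) (fun v => by
      rw [vadd_closedBall]
      exact measurableSet_closedBall)]
    simp only [measure_vadd]
    rw [tsum_fintype, Finset.sum_const, ih, Finset.card_univ, Fintype.card_fun,
      Fintype.card_fin, Fintype.card_fin, nsmul_eq_mul, pow_succ]
    push_cast
    ring

end Ball

lemma norm_val_mem {p : ℕ} [Fact p.Prime] {n : ℕ} (ξ : Fin n → ℚ_[p]) :
    ‖ξ‖ = 0 ∨ ∃ z : ℤ, ‖ξ‖ = (p:ℝ)^z := by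
  by_cases h : ‖ξ‖ = 0
  · exact Or.inl h
  · right
    have hne : Nonempty (Fin n) := by
      by_contra hc
      rw [not_nonempty_iff] at hc
      have : ξ = 0 := funext fun i => isEmptyElim i
      rw [this, norm_zero] at h
      exact h rfl
    obtain ⟨i, -, hi⟩ := Finset.exists_mem_eq_sup Finset.univ Finset.univ_nonempty
      (fun i => ‖ξ i‖₊)
    have hnorm : ‖ξ‖ = ‖ξ i‖ := by
      rw [Pi.norm_def, hi]
      rfl
    have hξi : ξ i ≠ 0 := by
      intro h0
      rw [hnorm, h0, norm_zero] at h
      exact h rfl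
    exact ⟨-(ξ i).valuation, by rw [hnorm, Padic.norm_eq_zpow_neg_valuation hξi]⟩

lemma measurable_norm_comp {p : ℕ} [Fact p.Prime] {n : ℕ} (F : ℝ → ℝ) :
    Measurable fun ξ : Fin n → ℚ_[p] => F ‖ξ‖ := by
  have hcnt : (Set.range fun ξ : Fin n → ℚ_[p] => ‖ξ‖).Countable := by
    apply Set.Countable.mono (s₁ := Set.range fun ξ : Fin n → ℚ_[p] => ‖ξ‖)
      (fun x hx => ?_)
      (((Set.countable_range fun z : ℤ => (p:ℝ)^z).insert 0))
    obtain ⟨ξ, rfl⟩ := hx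
    rcases norm_val_mem ξ with h | ⟨z, hz⟩
    · exact Set.mem_insert_iff.2 (Or.inl h)
    · exact Set.mem_insert_iff.2 (Or.inr ⟨z, hz.symm⟩)
  intro s _
  have heq : (fun ξ : Fin n → ℚ_[p] => F ‖ξ‖) ⁻¹' s
      = ⋃ r ∈ (Set.range fun ξ : Fin n → ℚ_[p] => ‖ξ‖) ∩ F ⁻¹' s,
          (fun ξ : Fin n → ℚ_[p] => ‖ξ‖) ⁻¹' {r} := by
    ext ξ
    simp only [Set.mem_preimage, Set.mem_iUnion, Set.mem_inter_iff, Set.mem_singleton_iff,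
      Set.mem_range, exists_prop]
    constructor
    · intro hξ
      exact ⟨‖ξ‖, ⟨⟨ξ, rfl⟩, hξ⟩, rfl⟩
    · rintro ⟨r, ⟨-, hr⟩, rfl⟩
      exact hr
  rw [heq]
  exact MeasurableSet.biUnion (hcnt.mono Set.inter_subset_left)
    (fun r _ => measurable_norm (measurableSet_singleton r))


/-- There is `C' > 0` with `∫_{ℚ_p^n∖ℤ_p^n} e^{−tA(ξ)} dⁿξ ≤ C' t^{−n/β}` for all
`t > 0`, and `C > 0` with `C t^{−n/β} ≤ ∫_{ℚ_p^n∖ℤ_p^n} e^{−tA(ξ)} dⁿξ` for all `0 < t ≤ 1`. -/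
theorem heat_trace_two_sided_bound {p n : ℕ} [Fact p.Prime] (hn : 0 < n)
    (μ : Measure (Fin n → ℚ_[p])) [μ.IsAddHaarMeasure]
    (hμ : μ (closedBall (0 : Fin n → ℚ_[p]) 1) = 1)
    (β C₀ C₁ : ℝ) (hβ : 0 < β) (hC₀ : 0 < C₀) (hC₁ : 0 < C₁)
    (A : (Fin n → ℚ_[p]) → ℝ) (g : ℝ → ℝ)
    (hrad : ∀ ξ : Fin n → ℚ_[p], A ξ = g ‖ξ‖)
    (hlow : ∀ ξ : Fin n → ℚ_[p], C₀ * ‖ξ‖ ^ β ≤ A ξ)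
    (hupp : ∀ ξ : Fin n → ℚ_[p], A ξ ≤ C₁ * ‖ξ‖ ^ β) :
    (∃ C' : ℝ, 0 < C' ∧ ∀ t : ℝ, 0 < t →
      (∫ ξ in {ξ : Fin n → ℚ_[p] | 1 < ‖ξ‖}, Real.exp (-(t * A ξ)) ∂μ) ≤
        C' * t ^ (-((n : ℝ) / β))) ∧
    (∃ C : ℝ, 0 < C ∧ ∀ t : ℝ, 0 < t → t ≤ 1 →
      C * t ^ (-((n : ℝ) / β)) ≤
        ∫ ξ in {ξ : Fin n → ℚ_[p] | 1 < ‖ξ‖}, Real.exp (-(t * A ξ)) ∂μ) := by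
  classical
  have hp1' : (1:ℝ) < (p:ℝ) := hp1
  have hp0 : (0:ℝ) < (p:ℝ) := lt_trans one_pos hp1'
  set γ : ℝ := (n:ℝ)/β with hγdef
  have hγ : 0 < γ := div_pos (Nat.cast_pos.2 hn) hβ
  set P : ℝ := (p:ℝ) ^ β with hPdef
  have hP : 1 < P := (Real.one_lt_rpow_iff_of_pos hp0).2 (Or.inl ⟨hp1', hβ⟩)
  have hP0 : (0:ℝ) < P := lt_trans one_pos hP
  have hPγ : P ^ γ = (p:ℝ)^(n:ℕ) := by
    rw [hPdef, ← Real.rpow_natCast (p:ℝ) n, ← Real.rpow_mul hp0.le]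
    congr 1
    rw [hγdef]
    field_simp
  have hnp : ∀ m : ℕ, (((p:ℝ)^m : ℝ)) ^ β = P ^ m := by
    intro m
    rw [← Real.rpow_natCast (p:ℝ) m, ← Real.rpow_natCast P m, hPdef,
      ← Real.rpow_mul hp0.le, ← Real.rpow_mul hp0.le, mul_comm]
  set B : ℕ → Set (Fin n → ℚ_[p]) := fun m => closedBall 0 ((p:ℝ)^m) with hBdef
  have hBmeas : ∀ m, MeasurableSet (B m) := fun m => measurableSet_closedBall
  have hBval : ∀ m, μ (B m) = ((p^n : ℕ) : ENNReal)^m := fun m => ball_meas μ hμ m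
  set D : ℕ → Set (Fin n → ℚ_[p]) := fun m => B (m+1) \ B m with hDdef
  have hDmeas : ∀ m, MeasurableSet (D m) := fun m => (hBmeas _).diff (hBmeas _)
  set I : Set (Fin n → ℚ_[p]) := {ξ : Fin n → ℚ_[p] | 1 < ‖ξ‖} with hIdef
  have hIunion : I = ⋃ m, D m := by
    ext ξ
    constructor
    · intro hξI
      have hξ : 1 < ‖ξ‖ := hξI
      have hex : ∃ k, ‖ξ‖ ≤ (p:ℝ)^k := by
        obtain ⟨k, hk⟩ := pow_unbounded_of_one_lt ‖ξ‖ hp1'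
        exact ⟨k, hk.le⟩
      have hk₀ : ‖ξ‖ ≤ (p:ℝ)^(Nat.find hex) := Nat.find_spec hex
      have hk₀pos : Nat.find hex ≠ 0 := by
        intro h0
        rw [h0, pow_zero] at hk₀
        linarith
      refine Set.mem_iUnion.2 ⟨Nat.find hex - 1, ?_, ?_⟩
      · have he : Nat.find hex - 1 + 1 = Nat.find hex := by omega
        rw [hBdef]
        simp only [mem_closedBall, dist_zero_right, he]
        exact hk₀
      · intro hmem
        have hmin := Nat.find_min hex (m := Nat.find hex - 1) (by omega)
        rw [hBdef] at hmem
        simp only [mem_closedBall, dist_zero_right] at hmem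
        exact hmin hmem
    · intro hξ
      obtain ⟨m, hm⟩ := Set.mem_iUnion.1 hξ
      have h1 : ¬ ‖ξ‖ ≤ (p:ℝ)^m := by
        have := hm.2
        rw [hBdef] at this
        simpa only [mem_closedBall, dist_zero_right] using this
      have h2 : (1:ℝ) ≤ (p:ℝ)^m := one_le_pow₀ hp1'.le
      push_neg at h1
      show 1 < ‖ξ‖
      linarith
  have hDdisj : Pairwise (Function.onFun Disjoint D) := by
    have key : ∀ a b : ℕ, a < b → Disjoint (D a) (D b) := by
      intro a b hab
      rw [Set.disjoint_left]
      intro ξ hξa hξb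
      have h1 : ‖ξ‖ ≤ (p:ℝ)^(a+1) := by
        have := hξa.1
        rw [hBdef] at this
        simpa only [mem_closedBall, dist_zero_right] using this
      have h2 : ¬ ‖ξ‖ ≤ (p:ℝ)^b := by
        have := hξb.2
        rw [hBdef] at this
        simpa only [mem_closedBall, dist_zero_right] using this
      exact h2 (le_trans h1 (pow_le_pow_right₀ hp1'.le (by omega)))
    intro a b hab
    rcases hab.lt_or_gt with h | h
    · exact key a b h
    · exact (key b a h).symm
  have hmeasf : ∀ t : ℝ, Measurable fun ξ : Fin n → ℚ_[p] => Real.exp (-(t * A ξ)) := by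
    intro t
    have he : (fun ξ : Fin n → ℚ_[p] => Real.exp (-(t * A ξ)))
        = fun ξ : Fin n → ℚ_[p] => (fun r => Real.exp (-(t * g r))) ‖ξ‖ := by
      funext ξ
      rw [hrad]
    rw [he]
    exact measurable_norm_comp (fun r => Real.exp (-(t * g r)))
  obtain ⟨K, hK, hKc⟩ := padic_sum_bound P γ hP hγ
  have hLbound : ∀ t : ℝ, 0 < t →
      (∫⁻ ξ in I, ENNReal.ofReal (Real.exp (-(t * A ξ))) ∂μ)
        ≤ ENNReal.ofReal ((p:ℝ)^(n:ℕ) * (K * (t*C₀) ^ (-γ))) := by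
    intro t ht
    have hc : 0 < t * C₀ := mul_pos ht hC₀
    obtain ⟨hsum, htsum⟩ := hKc (t*C₀) hc
    calc ∫⁻ ξ in I, ENNReal.ofReal (Real.exp (-(t * A ξ))) ∂μ
        = ∑' m : ℕ, ∫⁻ ξ in D m, ENNReal.ofReal (Real.exp (-(t * A ξ))) ∂μ := by
          rw [hIunion, lintegral_iUnion hDmeas hDdisj]
      _ ≤ ∑' m : ℕ, ENNReal.ofReal ((p:ℝ)^(n:ℕ) * ((P^γ)^m * Real.exp (-((t*C₀) * P^m)))) := by
          apply ENNReal.tsum_le_tsum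
          intro m
          have hpoint : ∀ ξ ∈ D m, ENNReal.ofReal (Real.exp (-(t * A ξ)))
              ≤ ENNReal.ofReal (Real.exp (-((t*C₀) * P^m))) := by
            intro ξ hξ
            apply ENNReal.ofReal_le_ofReal
            apply Real.exp_le_exp.2
            have hξn : (p:ℝ)^m ≤ ‖ξ‖ := by
              have := hξ.2
              rw [hBdef] at this
              simp only [mem_closedBall, dist_zero_right, not_le] at this
              exact this.le
            have h1 : P ^ m ≤ ‖ξ‖ ^ β := by
              rw [← hnp m]
              exact Real.rpow_le_rpow (by positivity) hξn hβ.le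
            have h2 : (t*C₀) * P^m ≤ t * A ξ := by
              calc (t*C₀) * P^m = t * (C₀ * P^m) := by ring
                _ ≤ t * (C₀ * ‖ξ‖^β) := by
                    apply mul_le_mul_of_nonneg_left _ ht.le
                    exact mul_le_mul_of_nonneg_left h1 hC₀.le
                _ ≤ t * A ξ := mul_le_mul_of_nonneg_left (hlow ξ) ht.le
            linarith
          calc ∫⁻ ξ in D m, ENNReal.ofReal (Real.exp (-(t * A ξ))) ∂μ
              ≤ ∫⁻ _ in D m, ENNReal.ofReal (Real.exp (-((t*C₀) * P^m))) ∂μ :=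
                setLIntegral_mono' (hDmeas m) hpoint
            _ = ENNReal.ofReal (Real.exp (-((t*C₀) * P^m))) * μ (D m) := setLIntegral_const _ _
            _ ≤ ENNReal.ofReal (Real.exp (-((t*C₀) * P^m))) * ((p^n:ℕ):ENNReal)^(m+1) := by
                apply mul_le_mul_right
                exact le_trans (measure_mono Set.diff_subset) (hBval (m+1)).le
            _ = ENNReal.ofReal ((p:ℝ)^(n:ℕ) * ((P^γ)^m * Real.exp (-((t*C₀) * P^m)))) := by
                have hcast : ((p^n:ℕ):ENNReal)^(m+1) = ENNReal.ofReal (((p:ℝ)^(n:ℕ))^(m+1)) := by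
                  rw [← ENNReal.ofReal_natCast (p^n), ← ENNReal.ofReal_pow (by positivity)]
                  congr 1
                  push_cast
                  ring
                rw [hcast, ← ENNReal.ofReal_mul (by positivity)]
                congr 1
                rw [← hPγ, pow_succ]
                ring
      _ = ENNReal.ofReal (∑' m : ℕ, (p:ℝ)^(n:ℕ) * ((P^γ)^m * Real.exp (-((t*C₀) * P^m)))) :=
          (ENNReal.ofReal_tsum_of_nonneg (fun m => by positivity) (hsum.mul_left _)).symm
      _ ≤ ENNReal.ofReal ((p:ℝ)^(n:ℕ) * (K * (t*C₀) ^ (-γ))) := by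
          apply ENNReal.ofReal_le_ofReal
          rw [tsum_mul_left]
          exact mul_le_mul_of_nonneg_left htsum (by positivity)
  have hnn : ∀ t : ℝ, 0 ≤ᶠ[ae (μ.restrict I)] fun ξ : Fin n → ℚ_[p] => Real.exp (-(t * A ξ)) :=
    fun t => Filter.Eventually.of_forall fun ξ => (Real.exp_pos _).le
  have hInt : ∀ t : ℝ, 0 < t → IntegrableOn (fun ξ => Real.exp (-(t * A ξ))) I μ := by
    intro t ht
    refine ⟨(hmeasf t).aestronglyMeasurable, ?_⟩
    rw [hasFiniteIntegral_iff_ofReal (hnn t)]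
    exact lt_of_le_of_lt (hLbound t ht) ENNReal.ofReal_lt_top
  have hIntEq : ∀ t : ℝ, (∫ ξ in I, Real.exp (-(t * A ξ)) ∂μ)
      = (∫⁻ ξ in I, ENNReal.ofReal (Real.exp (-(t * A ξ))) ∂μ).toReal := fun t =>
    integral_eq_lintegral_of_nonneg_ae (hnn t) (hmeasf t).aestronglyMeasurable
  constructor
  · refine ⟨(p:ℝ)^(n:ℕ) * K * C₀ ^ (-γ), by positivity, ?_⟩
    intro t ht
    rw [hIntEq t]
    have h1 := ENNReal.toReal_le_of_le_ofReal (by positivity) (hLbound t ht)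
    calc (∫⁻ ξ in I, ENNReal.ofReal (Real.exp (-(t * A ξ))) ∂μ).toReal
        ≤ (p:ℝ)^(n:ℕ) * (K * (t*C₀) ^ (-γ)) := h1
      _ = (p:ℝ)^(n:ℕ) * K * C₀ ^ (-γ) * t ^ (-γ) := by
          rw [Real.mul_rpow ht.le hC₀.le]
          ring
  · refine ⟨Real.exp (-(C₁ * P))/2, by positivity, ?_⟩
    intro t ht ht1
    set ε := Real.exp (-(C₁ * P)) with hεdef
    have hε : 0 < ε := Real.exp_pos _
    set x := Real.logb P t⁻¹ with hxdef
    have htinv : 1 ≤ t⁻¹ := (one_le_inv₀ ht).2 ht1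
    have hx0 : 0 ≤ x := Real.logb_nonneg hP htinv
    set m₁ : ℕ := max 1 ⌈x⌉₊ with hm₁def
    have hm₁1 : m₁ ≠ 0 := by
      rw [hm₁def]
      omega
    have hm₁x : x ≤ (m₁:ℝ) := le_trans (Nat.le_ceil x)
      (by exact_mod_cast le_max_right 1 ⌈x⌉₊)
    have hm₁ub : (m₁:ℝ) ≤ x + 1 := by
      rw [hm₁def, Nat.cast_max]
      apply max_le
      · norm_num
        linarith
      · exact (Nat.ceil_lt_add_one hx0).le
    have hlo2 : t⁻¹ ≤ P ^ m₁ := by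
      calc t⁻¹ = P ^ x := (Real.rpow_logb hP0 hP.ne' (inv_pos.2 ht)).symm
        _ ≤ P ^ (m₁:ℝ) := Real.rpow_le_rpow_of_exponent_le hP.le hm₁x
        _ = P ^ m₁ := Real.rpow_natCast P m₁
    have hup : t * P ^ m₁ ≤ P := by
      have h1 : P^(m₁:ℝ) ≤ P^(x+1) := Real.rpow_le_rpow_of_exponent_le hP.le hm₁ub
      have h2 : P^(x+1) = t⁻¹ * P := by
        rw [Real.rpow_add hP0, Real.rpow_logb hP0 hP.ne' (inv_pos.2 ht), Real.rpow_one]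
      calc t * P^m₁ = t * P^(m₁:ℝ) := by rw [Real.rpow_natCast]
        _ ≤ t * (t⁻¹ * P) := mul_le_mul_of_nonneg_left (by rw [← h2]; exact h1) ht.le
        _ = P := by field_simp
    have hAnnI : B m₁ \ B 0 ⊆ I := by
      intro ξ hξ
      have h0 := hξ.2
      rw [hBdef] at h0
      simp only [mem_closedBall, dist_zero_right, pow_zero, not_le] at h0
      exact h0
    have hB0sub : B 0 ⊆ B m₁ := by
      rw [hBdef]
      apply closedBall_subset_closedBall
      apply pow_le_pow_right₀ hp1'.le
      omega
    have hμB0 : μ (B 0) = 1 := by rw [hBval 0, pow_zero]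
    have hμAnn : μ (B m₁ \ B 0) = ((p^n:ℕ):ENNReal)^m₁ - 1 := by
      rw [measure_diff hB0sub (hBmeas 0).nullMeasurableSet (by rw [hμB0]; exact ENNReal.one_ne_top),
        hBval m₁, hμB0]
    have hQ2 : (2:ℝ) ≤ ((p^n:ℕ):ℝ)^m₁ := by
      have h1 : 2 ≤ p^n := le_trans (Fact.out : p.Prime).two_le (Nat.le_self_pow hn.ne' p)
      have h2 : (2:ℝ) ≤ ((p^n:ℕ):ℝ) := by exact_mod_cast h1
      calc (2:ℝ) ≤ ((p^n:ℕ):ℝ) := h2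
        _ ≤ ((p^n:ℕ):ℝ)^m₁ := le_self_pow₀ (by linarith) hm₁1
    have hμAnnR : (μ (B m₁ \ B 0)).toReal = ((p^n:ℕ):ℝ)^m₁ - 1 := by
      rw [hμAnn, ENNReal.toReal_sub_of_le]
      · rw [ENNReal.toReal_pow, ENNReal.toReal_natCast, ENNReal.toReal_one]
      · exact one_le_pow₀ (by exact_mod_cast Nat.one_le_iff_ne_zero.2 (pow_ne_zero n (Fact.out : p.Prime).ne_zero))
      · exact ENNReal.pow_ne_top (ENNReal.natCast_ne_top _)
    have hptw : ∀ ξ ∈ B m₁ \ B 0, ε ≤ Real.exp (-(t * A ξ)) := by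
      intro ξ hξ
      rw [hεdef]
      apply Real.exp_le_exp.2
      have hξn : ‖ξ‖ ≤ (p:ℝ)^m₁ := by
        have := hξ.1
        rw [hBdef] at this
        simpa only [mem_closedBall, dist_zero_right] using this
      have h1 : ‖ξ‖^β ≤ P^m₁ := by
        rw [← hnp m₁]
        exact Real.rpow_le_rpow (norm_nonneg _) hξn hβ.le
      have h2 : t * A ξ ≤ C₁ * P := by
        calc t * A ξ ≤ t * (C₁ * ‖ξ‖^β) := mul_le_mul_of_nonneg_left (hupp ξ) ht.le
          _ ≤ t * (C₁ * P^m₁) := by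
              apply mul_le_mul_of_nonneg_left _ ht.le
              exact mul_le_mul_of_nonneg_left h1 hC₁.le
          _ = C₁ * (t * P^m₁) := by ring
          _ ≤ C₁ * P := mul_le_mul_of_nonneg_left hup hC₁.le
      linarith
    have hfin : μ (B m₁ \ B 0) ≠ ⊤ := by
      rw [hμAnn]
      exact ne_top_of_le_ne_top (ENNReal.pow_ne_top (ENNReal.natCast_ne_top _)) tsub_le_self
    have hIntAnn : IntegrableOn (fun ξ => Real.exp (-(t * A ξ))) (B m₁ \ B 0) μ :=
      (hInt t ht).mono_set hAnnI
    have hconst : IntegrableOn (fun _ => ε) (B m₁ \ B 0) μ :=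
      integrableOn_const hfin
    have hmono1 : (μ (B m₁ \ B 0)).toReal * ε ≤ ∫ ξ in B m₁ \ B 0, Real.exp (-(t * A ξ)) ∂μ := by
      have h := setIntegral_mono_on hconst hIntAnn ((hBmeas m₁).diff (hBmeas 0)) hptw
      rwa [setIntegral_const, smul_eq_mul] at h
    have hmono2 : (∫ ξ in B m₁ \ B 0, Real.exp (-(t * A ξ)) ∂μ)
        ≤ ∫ ξ in I, Real.exp (-(t * A ξ)) ∂μ :=
      setIntegral_mono_set (hInt t ht) (hnn t) (HasSubset.Subset.eventuallyLE hAnnI)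
    have hX : t ^ (-γ) ≤ ((p^n:ℕ):ℝ)^m₁ := by
      have h1 : ((p^n:ℕ):ℝ)^m₁ = (P^m₁ : ℝ)^γ := by
        have h2 : ((p^n:ℕ):ℝ) = P^γ := by
          rw [hPγ]
          push_cast
          ring
        rw [h2, ← Real.rpow_natCast (P^γ) m₁, ← Real.rpow_natCast P m₁,
          ← Real.rpow_mul hP0.le, ← Real.rpow_mul hP0.le, mul_comm]
      rw [h1]
      calc t^(-γ) = (t⁻¹)^γ := by rw [Real.rpow_neg ht.le, ← Real.inv_rpow ht.le]
        _ ≤ (P^m₁ : ℝ)^γ := Real.rpow_le_rpow (inv_pos.2 ht).le hlo2 hγ.le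
    calc ε/2 * t^(-γ) ≤ ε/2 * ((p^n:ℕ):ℝ)^m₁ := by
          apply mul_le_mul_of_nonneg_left hX (by positivity)
      _ ≤ (((p^n:ℕ):ℝ)^m₁ - 1) * ε := by nlinarith
      _ = (μ (B m₁ \ B 0)).toReal * ε := by rw [hμAnnR]
      _ ≤ ∫ ξ in B m₁ \ B 0, Real.exp (-(t * A ξ)) ∂μ := hmono1
      _ ≤ ∫ ξ in I, Real.exp (-(t * A ξ)) ∂μ := hmono2
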